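/- The generating function of RNA secondary structures satisfies S(z) = (1 − z + z^2 − √((z^2 + z + 1)(z^2 − 3z + 1)))/(2 z^2); equivalently, S(z) satisfies the algebraic equation z^2 S(z)^2 − (1 − z + z^2) S(z) + 1 = 0, with S(0) = 1. -/

import Mathlib

open Finset Filter Topology Asymptotics

/-- An RNA secondary structure of length `n`: a set of arcs `(i,j)`, `1 ≤ i < j ≤ n`,
which form a partial matching (no shared endpoints), are noncrossing, and contain
no 1-arc `(i,i+1)`. -/
def IsSecStr (n : ℕ) (A : Finset (ℕ × ℕ)) : Prop :=
  (∀ p ∈ A, 1 ≤ p.1 ∧ p.1 < p.2 ∧ p.2 ≤ n ∧ p.2 ≠ p.1 + 1) ∧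
  (∀ p ∈ A, ∀ q ∈ A, p ≠ q →
    p.1 ≠ q.1 ∧ p.1 ≠ q.2 ∧ p.2 ≠ q.1 ∧ p.2 ≠ q.2) ∧
  (∀ p ∈ A, ∀ q ∈ A, ¬ (p.1 < q.1 ∧ q.1 < p.2 ∧ p.2 < q.2))

/-- `s(n)`: the number of RNA secondary structures of length `n`. -/
noncomputable def secCount (n : ℕ) : ℕ :=
  Nat.card {A : Finset (ℕ × ℕ) // IsSecStr n A}

/-- The diagram graph of a secondary structure: backbone edges `(i,i+1)` together
with the arcs, on vertices `1,…,n`. -/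
def diagGraph (n : ℕ) (A : Finset (ℕ × ℕ)) : SimpleGraph ℕ where
  Adj i j := i ≠ j ∧ 1 ≤ i ∧ i ≤ n ∧ 1 ≤ j ∧ j ≤ n ∧
    (j = i + 1 ∨ i = j + 1 ∨ (i, j) ∈ A ∨ (j, i) ∈ A)
  symm := ⟨by
    rintro i j ⟨h1, h2, h3, h4, h5, h6⟩
    exact ⟨h1.symm, h4, h5, h2, h3, by tauto⟩⟩
  loopless := ⟨by rintro i ⟨h1, _⟩; exact h1 rfl⟩

/-- The 5'-3' distance of a secondary structure: the graph distance from
vertex `1` to vertex `n` in its diagram. -/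
noncomputable def secDist (n : ℕ) (A : Finset (ℕ × ℕ)) : ℕ :=
  (diagGraph n A).dist 1 n

/-- `w(n,d)`: the number of secondary structures of length `n` with 5'-3' distance `d`. -/
noncomputable def wCount (n d : ℕ) : ℕ :=
  Nat.card {A : Finset (ℕ × ℕ) // IsSecStr n A ∧ secDist n A = d}

/-- The dominant singularity `ρ = (3 − √5)/2`. -/
noncomputable def rho : ℝ := (3 - Real.sqrt 5) / 2

/-- The generating function of RNA secondary structures, in closed form. -/
noncomputable def Sfun (z : ℝ) : ℝ :=
  (1 - z + z ^ 2 - Real.sqrt ((z ^ 2 + z + 1) * (z ^ 2 - 3 * z + 1))) / (2 * z ^ 2)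

/-- The bivariate generating function `W(z,u)`, in closed form. -/
noncomputable def Wfun (z u : ℝ) : ℝ :=
  u * z ^ 2 * (Sfun z - 1) /
    ((1 - z * u) ^ 2 - (1 - z * u) * (z * u) ^ 2 * (Sfun z - 1)) + z / (1 - z * u)

/-- `cov A j`: the number of arcs of `A` covering the gap between vertices `j` and `j+1`
(equivalently, the size of the shape of the associated 1-tableau at that gap). -/
def cov (A : Finset (ℕ × ℕ)) (j : ℕ) : ℕ :=
  (A.filter (fun p => p.1 ≤ j ∧ j < p.2)).card

/-- An irreducible secondary structure: the associated tableau never returns to the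
empty shape strictly between the two ends, i.e. every interior gap is covered by an arc. -/
def IsIrr (n : ℕ) (A : Finset (ℕ × ℕ)) : Prop :=
  IsSecStr n A ∧ 2 ≤ n ∧ ∀ j, 1 ≤ j → j ≤ n - 1 → 1 ≤ cov A j

/-- `i(n)`: the number of irreducible secondary structures of length `n`. -/
noncomputable def irrCount (n : ℕ) : ℕ :=
  Nat.card {A : Finset (ℕ × ℕ) // IsIrr n A}

open Classical in
noncomputable def strF (n : ℕ) : Finset (Finset (ℕ × ℕ)) :=
  ((range (n+1) ×ˢ range (n+1)).powerset).filter (fun A => IsSecStr n A)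

lemma mem_strF {n : ℕ} {A : Finset (ℕ × ℕ)} : A ∈ strF n ↔ IsSecStr n A := by
  classical
  simp only [strF, mem_filter, mem_powerset, and_iff_right_iff_imp]
  intro h p hp
  have := h.1 p hp
  simp only [Finset.mem_product, Finset.mem_range]
  omega

lemma arc_split {n j : ℕ} {A : Finset (ℕ × ℕ)} (hA : IsSecStr (n+1) A) (hjA : (j, n+1) ∈ A)
    {p : ℕ × ℕ} (hp : p ∈ A) (hne : p ≠ (j, n+1)) : p.2 < j ∨ (j < p.1 ∧ p.2 ≤ n) := by
  obtain ⟨hb, hm, hc⟩ := hA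
  have h1 := hb p hp
  have h2 := hm p hp (j, n+1) hjA hne
  have h3 := hc p hp (j, n+1) hjA
  dsimp only at h2 h3
  omega

lemma arcj_bounds {n j : ℕ} {A : Finset (ℕ × ℕ)} (hA : IsSecStr (n+1) A) (hjA : (j, n+1) ∈ A) :
    1 ≤ j ∧ j + 1 ≤ n := by
  have := hA.1 (j, n+1) hjA
  dsimp only at this
  omega

open Classical in
lemma glue {n j : ℕ} {A₁ A₂ : Finset (ℕ × ℕ)} (hj1 : 1 ≤ j) (hj2 : j + 1 ≤ n)
    (h1 : IsSecStr (j-1) A₁) (h2 : IsSecStr (n-j) A₂) :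
    IsSecStr (n+1) (A₁ ∪ A₂.image (fun p => (p.1 + j, p.2 + j)) ∪ {(j, n+1)}) := by
  obtain ⟨b1, m1, c1⟩ := h1; obtain ⟨b2, m2, c2⟩ := h2
  have memCases : ∀ p ∈ A₁ ∪ A₂.image (fun p => (p.1 + j, p.2 + j)) ∪ {(j, n+1)},
      p ∈ A₁ ∨ (∃ a ∈ A₂, (a.1 + j, a.2 + j) = p) ∨ p = (j, n+1) := by
    intro p hp
    simp only [mem_union, mem_image, mem_singleton] at hp
    rcases hp with (h | ⟨a, ha, e⟩) | h
    · exact Or.inl h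
    · exact Or.inr (Or.inl ⟨a, ha, e⟩)
    · exact Or.inr (Or.inr h)
  refine ⟨?_, ?_, ?_⟩
  · intro p hp
    rcases memCases p hp with h | ⟨a, ha, rfl⟩ | rfl
    · have := b1 p h; omega
    · have := b2 a ha; dsimp only; omega
    · dsimp only; omega
  · intro p hp q hq hne
    rcases memCases p hp with h | ⟨a, ha, rfl⟩ | rfl <;>
      rcases memCases q hq with h' | ⟨b, hb', rfl⟩ | rfl
    · exact m1 p h q h' hne
    · have := b1 p h; have := b2 b hb'; dsimp only; omega
    · have := b1 p h; dsimp only; omega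
    · have := b2 a ha; have := b1 q h'; dsimp only; omega
    · have hab : a ≠ b := fun h => hne (by rw [h])
      have := m2 a ha b hb' hab
      have := b2 a ha; have := b2 b hb'; dsimp only; omega
    · have := b2 a ha; dsimp only; omega
    · have := b1 q h'; dsimp only; omega
    · have := b2 b hb'; dsimp only; omega
    · exact absurd rfl hne
  · intro p hp q hq
    rcases memCases p hp with h | ⟨a, ha, rfl⟩ | rfl <;>
      rcases memCases q hq with h' | ⟨b, hb', rfl⟩ | rfl
    · exact c1 p h q h'
    · have := b1 p h; have := b2 b hb'; dsimp only; omega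
    · have := b1 p h; dsimp only; omega
    · have := b2 a ha; have := b1 q h'; dsimp only; omega
    · have := c2 a ha b hb'
      have := b2 a ha; have := b2 b hb'; dsimp only; omega
    · have := b2 a ha; dsimp only; omega
    · have := b1 q h'; dsimp only; omega
    · have := b2 b hb'; dsimp only; omega
    · dsimp only; omega

lemma secCount_eq (n : ℕ) : secCount n = (strF n).card := by
  have h : {A : Finset (ℕ × ℕ) | IsSecStr n A} = ↑(strF n) := by
    ext A; simp [mem_strF]
  rw [secCount, ← Set.ncard_coe_finset, ← h]
  exact Nat.card_coe_set_eq _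

open Classical in
lemma cardC (n j : ℕ) (hj1 : 1 ≤ j) (hj2 : j + 1 ≤ n) :
    ((strF (n+1)).filter (fun A => (j, n+1) ∈ A)).card = secCount (j-1) * secCount (n-j) := by
  rw [secCount_eq, secCount_eq, ← Finset.card_product]
  refine Finset.card_bij'
    (fun A _ => (A.filter (fun p => p.2 < j),
      (A.filter (fun p => j < p.1)).image (fun p => (p.1 - j, p.2 - j))))
    (fun P _ => P.1 ∪ (P.2.image (fun p => (p.1 + j, p.2 + j))) ∪ {(j, n+1)})
    ?_ ?_ ?_ ?_
  · -- forward well-defined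
    intro A hA
    rw [mem_filter, mem_strF] at hA
    obtain ⟨hA, hjA⟩ := hA
    obtain ⟨hb, hm, hc⟩ := hA
    rw [Finset.mem_product, mem_strF, mem_strF]
    constructor
    · refine ⟨?_, ?_, ?_⟩
      · intro p hp
        rw [mem_filter] at hp
        have := hb p hp.1
        have := hp.2
        omega
      · intro p hp q hq hne
        rw [mem_filter] at hp hq
        exact hm p hp.1 q hq.1 hne
      · intro p hp q hq
        rw [mem_filter] at hp hq
        exact hc p hp.1 q hq.1
    · have key : ∀ p ∈ A, j < p.1 → j < p.2 ∧ p.2 ≤ n := by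
        intro p hp hjp
        have hne : p ≠ (j, n+1) := by
          intro h; rw [h] at hjp; dsimp only at hjp; omega
        have := arc_split ⟨hb, hm, hc⟩ hjA hp hne
        have := hb p hp
        omega
      refine ⟨?_, ?_, ?_⟩
      · intro p hp
        simp only [mem_image, mem_filter] at hp
        obtain ⟨a, ⟨ha, hja⟩, rfl⟩ := hp
        have := hb a ha
        have := key a ha hja
        dsimp only; omega
      · intro p hp q hq hne
        simp only [mem_image, mem_filter] at hp hq
        obtain ⟨a, ⟨ha, hja⟩, rfl⟩ := hp
        obtain ⟨b', ⟨hb', hjb⟩, rfl⟩ := hq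
        have hab : a ≠ b' := fun h => hne (by rw [h])
        have := hm a ha b' hb' hab
        have := key a ha hja
        have := key b' hb' hjb
        have := hb a ha
        have := hb b' hb'
        dsimp only; omega
      · intro p hp q hq
        simp only [mem_image, mem_filter] at hp hq
        obtain ⟨a, ⟨ha, hja⟩, rfl⟩ := hp
        obtain ⟨b', ⟨hb', hjb⟩, rfl⟩ := hq
        have := hc a ha b' hb'
        have := key a ha hja
        have := key b' hb' hjb
        have := hb a ha
        have := hb b' hb'
        dsimp only; omega
  · -- backward well-defined
    intro P hP
    rw [Finset.mem_product, mem_strF, mem_strF] at hP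
    rw [mem_filter, mem_strF]
    refine ⟨glue hj1 hj2 hP.1 hP.2, ?_⟩
    simp only [mem_union, mem_singleton]
    tauto
  · -- left inverse : g (f A) = A
    intro A hA
    rw [mem_filter, mem_strF] at hA
    obtain ⟨hA, hjA⟩ := hA
    ext p
    simp only [mem_union, mem_image, mem_filter, mem_singleton]
    constructor
    · rintro ((⟨hp, _⟩ | ⟨a, ⟨q, ⟨hq, hjq⟩, rfl⟩, rfl⟩) | rfl)
      · exact hp
      · have hbq := hA.1 q hq
        have : (q.1 - j + j, q.2 - j + j) = q := by
          have : q.1 - j + j = q.1 := by omega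
          have h2 : q.2 - j + j = q.2 := by omega
          rw [this, h2]
        rw [this]; exact hq
      · exact hjA
    · intro hp
      by_cases hne : p = (j, n+1)
      · right; exact hne
      · left
        rcases arc_split hA hjA hp hne with h | ⟨h1, h2⟩
        · exact Or.inl ⟨hp, h⟩
        · right
          refine ⟨(p.1 - j, p.2 - j), ⟨p, ⟨hp, h1⟩, rfl⟩, ?_⟩
          have hbp := hA.1 p hp
          have e1 : p.1 - j + j = p.1 := by omega
          have e2 : p.2 - j + j = p.2 := by omega
          dsimp only
          rw [e1, e2]
  · -- right inverse : f (g P) = P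
    intro P hP
    rw [Finset.mem_product, mem_strF, mem_strF] at hP
    obtain ⟨h1, h2⟩ := hP
    have ext1 : (P.1 ∪ P.2.image (fun p => (p.1 + j, p.2 + j)) ∪ {(j, n+1)}).filter
        (fun p => p.2 < j) = P.1 := by
      ext p
      simp only [mem_filter, mem_union, mem_image, mem_singleton]
      constructor
      · rintro ⟨(hp | ⟨a, ha, rfl⟩) | rfl, hlt⟩
        · exact hp
        · have := h2.1 a ha; dsimp only at hlt; omega
        · dsimp only at hlt; omega
      · intro hp
        have := h1.1 p hp
        exact ⟨Or.inl (Or.inl hp), by omega⟩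
    have ext2 : ((P.1 ∪ P.2.image (fun p => (p.1 + j, p.2 + j)) ∪ {(j, n+1)}).filter
        (fun p => j < p.1)).image (fun p => (p.1 - j, p.2 - j)) = P.2 := by
      ext p
      simp only [mem_image, mem_filter, mem_union, mem_singleton]
      constructor
      · rintro ⟨q, ⟨(hq | ⟨a, ha, rfl⟩) | rfl, hlt⟩, rfl⟩
        · have := h1.1 q hq; omega
        · have := h2.1 a ha
          have : (a.1 + j - j, a.2 + j - j) = a := by
            have e1 : a.1 + j - j = a.1 := by omega
            have e2 : a.2 + j - j = a.2 := by omega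
            rw [e1, e2]
          rw [this]; exact ha
        · dsimp only at hlt; omega
      · intro hp
        have := h2.1 p hp
        refine ⟨(p.1 + j, p.2 + j), ⟨Or.inl (Or.inr ⟨p, hp, rfl⟩), by dsimp only; omega⟩, ?_⟩
        have e1 : p.1 + j - j = p.1 := by omega
        have e2 : p.2 + j - j = p.2 := by omega
        show (p.1 + j - j, p.2 + j - j) = p
        rw [e1, e2]
    rw [ext1, ext2]

open Classical in
lemma B_eq (n : ℕ) : (strF (n+1)).filter (fun A => ∀ p ∈ A, p.2 ≠ n+1) = strF n := by
  ext A
  simp only [mem_filter, mem_strF]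
  constructor
  · rintro ⟨⟨hb, hm, hc⟩, hno⟩
    refine ⟨fun p hp => ?_, hm, hc⟩
    have := hb p hp
    have := hno p hp
    omega
  · rintro ⟨hb, hm, hc⟩
    refine ⟨⟨fun p hp => ?_, hm, hc⟩, fun p hp => ?_⟩ <;>
    · have := hb p hp; omega

open Classical in
lemma partitionF (n : ℕ) : strF (n+1) =
    (strF (n+1)).filter (fun A => ∀ p ∈ A, p.2 ≠ n+1) ∪
    (Icc 1 (n-1)).biUnion (fun j => (strF (n+1)).filter (fun A => (j, n+1) ∈ A)) := by
  ext A
  simp only [mem_union, mem_filter, mem_biUnion, mem_Icc]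
  constructor
  · intro hA
    by_cases h : ∀ p ∈ A, p.2 ≠ n+1
    · exact Or.inl ⟨hA, h⟩
    · right
      push_neg at h
      obtain ⟨p, hp, hp2⟩ := h
      have hb := (mem_strF.mp hA).1 p hp
      refine ⟨p.1, by omega, hA, ?_⟩
      have : (p.1, n+1) = p := by rw [← hp2]
      rwa [this]
  · rintro (⟨h, _⟩ | ⟨j, _, h, _⟩) <;> exact h

open Classical in
lemma secCount_rec (n : ℕ) :
    secCount (n+1) = secCount n + ∑ j ∈ Icc 1 (n-1), secCount (j-1) * secCount (n-j) := by
  rw [secCount_eq (n+1), partitionF n]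
  rw [Finset.card_union_of_disjoint]
  · rw [Finset.card_biUnion]
    · rw [B_eq, ← secCount_eq]
      congr 1
      apply Finset.sum_congr rfl
      intro j hj
      rw [mem_Icc] at hj
      exact cardC n j hj.1 (by omega)
    · intro j hj j' hj' hne
      rw [Function.onFun, Finset.disjoint_left]
      intro A hA hA'
      rw [mem_filter] at hA hA'
      have hm := (mem_strF.mp hA.1).2.1
      have := hm (j, n+1) hA.2 (j', n+1) hA'.2 (by simp [hne])
      dsimp only at this
      omega
  · rw [Finset.disjoint_left]
    intro A hA hA'
    rw [mem_filter] at hA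
    simp only [mem_biUnion, mem_filter] at hA'
    obtain ⟨j, _, _, hj⟩ := hA'
    exact hA.2 (j, n+1) hj rfl


lemma secCount_zero : secCount 0 = 1 := by
  rw [secCount_eq]
  have h : strF 0 = {∅} := by
    ext A
    simp only [mem_strF, Finset.mem_singleton]
    constructor
    · intro h
      ext p
      simp only [Finset.notMem_empty, iff_false]
      intro hp
      have := h.1 p hp
      omega
    · rintro rfl
      refine ⟨by simp, by simp, by simp⟩
  simp [h]

lemma secCount_rec' (m : ℕ) :
    secCount (m+1) = secCount m + ∑ k ∈ range (m-1), secCount k * secCount (m-1-k) := by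
  rw [secCount_rec m]
  congr 1
  have hIcc : Icc 1 (m-1) = Ico 1 m := by
    ext x; simp only [Finset.mem_Icc, Finset.mem_Ico]; omega
  rw [hIcc, Finset.sum_Ico_eq_sum_range]
  apply Finset.sum_congr rfl
  intro k hk
  rw [Finset.mem_range] at hk
  rw [show 1 + k - 1 = k by omega, show m - (1 + k) = m - 1 - k by omega]

section
variable {z : ℝ}

lemma quad_pos (hz0 : 0 < z) (hz1 : z < rho) : 0 < z ^ 2 - 3 * z + 1 := by
  have hs : Real.sqrt 5 ^ 2 = 5 := Real.sq_sqrt (by norm_num)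
  have hs2 : 2 ≤ Real.sqrt 5 := by
    rw [show (2:ℝ) = Real.sqrt 4 by rw [show (4:ℝ) = 2^2 by norm_num, Real.sqrt_sq]; norm_num]
    exact Real.sqrt_le_sqrt (by norm_num)
  rw [rho] at hz1
  nlinarith [hz1, hs, hs2]

lemma D_pos (hz0 : 0 < z) (hz1 : z < rho) : 0 < (z ^ 2 + z + 1) * (z ^ 2 - 3 * z + 1) :=
  mul_pos (by nlinarith) (quad_pos hz0 hz1)

lemma zlt (hz0 : 0 < z) (hz1 : z < rho) : z < 1/2 := by
  have hs : Real.sqrt 5 ^ 2 = 5 := Real.sq_sqrt (by norm_num)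
  have hs2 : 2 ≤ Real.sqrt 5 := by
    rw [show (2:ℝ) = Real.sqrt 4 by rw [show (4:ℝ) = 2^2 by norm_num, Real.sqrt_sq]; norm_num]
    exact Real.sqrt_le_sqrt (by norm_num)
  rw [rho] at hz1
  nlinarith

lemma sqrtD_sq (hz0 : 0 < z) (hz1 : z < rho) :
    Real.sqrt ((z ^ 2 + z + 1) * (z ^ 2 - 3 * z + 1)) ^ 2
      = (z ^ 2 + z + 1) * (z ^ 2 - 3 * z + 1) :=
  Real.sq_sqrt (D_pos hz0 hz1).le

lemma sqrtD_pos (hz0 : 0 < z) (hz1 : z < rho) :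
    0 < Real.sqrt ((z ^ 2 + z + 1) * (z ^ 2 - 3 * z + 1)) :=
  Real.sqrt_pos.mpr (D_pos hz0 hz1)

lemma twoz2S (hz0 : 0 < z) :
    2 * z ^ 2 * Sfun z = (1 - z + z ^ 2) - Real.sqrt ((z ^ 2 + z + 1) * (z ^ 2 - 3 * z + 1)) := by
  rw [Sfun]
  field_simp

lemma Sfun_quad (hz0 : 0 < z) (hz1 : z < rho) :
    z ^ 2 * Sfun z ^ 2 - (1 - z + z ^ 2) * Sfun z + 1 = 0 := by
  have h := twoz2S (z := z) hz0
  have hsq := sqrtD_sq hz0 hz1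
  have h4 : (4:ℝ) * z ^ 2 ≠ 0 := by positivity
  apply mul_left_cancel₀ h4
  rw [mul_zero]
  linear_combination (2 * z ^ 2 * Sfun z - (1 - z + z ^ 2)
    - Real.sqrt ((z ^ 2 + z + 1) * (z ^ 2 - 3 * z + 1))) * h + hsq

lemma Sfun_ge_one (hz0 : 0 < z) (hz1 : z < rho) : 1 ≤ Sfun z := by
  have h := twoz2S (z := z) hz0
  have hsq := sqrtD_sq hz0 hz1
  have hwpos := sqrtD_pos hz0 hz1
  have hzh := zlt hz0 hz1
  have ht : 0 < 1 - z - z ^ 2 := by nlinarith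
  have hlt : Real.sqrt ((z ^ 2 + z + 1) * (z ^ 2 - 3 * z + 1)) < 1 - z - z ^ 2 := by
    refine (Real.sqrt_lt' ht).mpr ?_
    nlinarith [pow_pos hz0 3]
  nlinarith [h, hlt, pow_pos hz0 2]

lemma Sfun_id (hz0 : 0 < z) (hz1 : z < rho) :
    Sfun z = 1 + z * Sfun z + z ^ 2 * Sfun z * (Sfun z - 1) := by
  have h := Sfun_quad hz0 hz1
  linear_combination -h

end

lemma gf_eq (s : ℕ → ℕ) (h0 : s 0 = 1)
    (hrec : ∀ m, s (m+1) = s m + ∑ k ∈ range (m-1), s k * s (m-1-k))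
    {z : ℝ} (hz0 : 0 < z) (hz1 : z < rho) :
    ∑' n : ℕ, (s n : ℝ) * z ^ n = Sfun z := by
  set S := Sfun z with hS_def
  have hS1 : 1 ≤ S := Sfun_ge_one hz0 hz1
  have hSid : S = 1 + z * S + z ^ 2 * S * (S - 1) := Sfun_id hz0 hz1
  set a : ℕ → ℝ := fun n => (s n : ℝ) * z ^ n with ha_def
  have ha : ∀ n, 0 ≤ a n := fun n => mul_nonneg (Nat.cast_nonneg _) (pow_nonneg hz0.le n)
  have ha0 : a 0 = 1 := by simp [ha_def, h0]
  set c : ℕ → ℝ := fun m => ∑ k ∈ range (m-1), a k * a (m-1-k) with hc_def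
  have hcnn : ∀ m, 0 ≤ c m := fun m =>
    Finset.sum_nonneg (fun k _ => mul_nonneg (ha _) (ha _))
  have haRec : ∀ m, a (m+1) = z * a m + z ^ 2 * c m := by
    intro m
    simp only [ha_def, hc_def]
    push_cast [hrec m]
    rw [add_mul, Finset.sum_mul, Finset.mul_sum]
    congr 1
    · rw [pow_succ]; ring
    · apply Finset.sum_congr rfl
      intro k hk
      rw [Finset.mem_range] at hk
      rw [show m + 1 = 2 + (k + (m - 1 - k)) by omega, pow_add, pow_add]
      ring
  -- partial sums bounded by S
  have Pbound : ∀ N, ∑ n ∈ range N, a n ≤ S := by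
    intro N
    induction N with
    | zero => simp; linarith
    | succ N ih =>
      have tail : ∑ l ∈ Ico 1 N, a l ≤ S - 1 := by
        rcases Nat.eq_zero_or_pos N with rfl | hN
        · simp; linarith
        · rw [Finset.sum_Ico_eq_sub _ hN]
          simp only [Finset.range_one, Finset.sum_singleton, ha0]
          linarith
      have convB : ∑ m ∈ range N, c m ≤ S * (S - 1) := by
        have e1 : ∑ m ∈ range N, c m
            = ∑ x ∈ (range N).sigma (fun m => range (m-1)), a x.2 * a (x.1 - 1 - x.2) := by
          rw [Finset.sum_sigma]
        have hinj : ∀ x ∈ (range N).sigma (fun m => range (m-1)),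
            ∀ y ∈ (range N).sigma (fun m => range (m-1)),
            (fun x : Σ _ : ℕ, ℕ => (x.2, x.1 - 1 - x.2)) x
              = (fun x : Σ _ : ℕ, ℕ => (x.2, x.1 - 1 - x.2)) y → x = y := by
          rintro ⟨x1, x2⟩ hx ⟨y1, y2⟩ hy hxy
          simp only [Finset.mem_sigma, Finset.mem_range] at hx hy
          simp only [Prod.mk.injEq] at hxy
          obtain ⟨e2, e3⟩ := hxy
          have : x1 = y1 := by omega
          subst this; subst e2; rfl
        have e2 : ∑ x ∈ (range N).sigma (fun m => range (m-1)), a x.2 * a (x.1 - 1 - x.2)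
            = ∑ p ∈ ((range N).sigma (fun m => range (m-1))).image
                (fun x : Σ _ : ℕ, ℕ => (x.2, x.1 - 1 - x.2)), a p.1 * a p.2 :=
          (Finset.sum_image (f := fun p : ℕ × ℕ => a p.1 * a p.2) hinj).symm
        have hsub : ((range N).sigma (fun m => range (m-1))).image
            (fun x : Σ _ : ℕ, ℕ => (x.2, x.1 - 1 - x.2)) ⊆ range N ×ˢ Ico 1 N := by
          intro p hp
          simp only [Finset.mem_image, Finset.mem_sigma, Finset.mem_range] at hp
          obtain ⟨⟨m, k⟩, ⟨hm, hk⟩, rfl⟩ := hp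
          simp only [Finset.mem_product, Finset.mem_range, Finset.mem_Ico]
          dsimp only at hm hk ⊢
          omega
        have e3 : ∑ p ∈ ((range N).sigma (fun m => range (m-1))).image
              (fun x : Σ _ : ℕ, ℕ => (x.2, x.1 - 1 - x.2)), a p.1 * a p.2
            ≤ ∑ p ∈ range N ×ˢ Ico 1 N, a p.1 * a p.2 :=
          Finset.sum_le_sum_of_subset_of_nonneg hsub
            (fun p _ _ => mul_nonneg (ha _) (ha _))
        have e4 : ∑ p ∈ range N ×ˢ Ico 1 N, a p.1 * a p.2
            = (∑ k ∈ range N, a k) * (∑ l ∈ Ico 1 N, a l) := by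
          rw [Finset.sum_product, Finset.sum_mul_sum]
        rw [e1, e2]
        calc _ ≤ ∑ p ∈ range N ×ˢ Ico 1 N, a p.1 * a p.2 := e3
          _ = (∑ k ∈ range N, a k) * (∑ l ∈ Ico 1 N, a l) := e4
          _ ≤ S * (S - 1) := by
              apply mul_le_mul ih tail
                (Finset.sum_nonneg (fun l _ => ha l)) (by linarith)
      rw [Finset.sum_range_succ']
      calc (∑ m ∈ range N, a (m+1)) + a 0
          = (∑ m ∈ range N, (z * a m + z ^ 2 * c m)) + 1 := by
            rw [ha0]; congr 1; exact Finset.sum_congr rfl (fun m _ => haRec m)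
        _ = z * (∑ m ∈ range N, a m) + z ^ 2 * (∑ m ∈ range N, c m) + 1 := by
            rw [Finset.sum_add_distrib, ← Finset.mul_sum, ← Finset.mul_sum]
        _ ≤ z * S + z ^ 2 * (S * (S - 1)) + 1 := by
            have h1 : z * (∑ m ∈ range N, a m) ≤ z * S :=
              mul_le_mul_of_nonneg_left ih hz0.le
            have h2 : z ^ 2 * (∑ m ∈ range N, c m) ≤ z ^ 2 * (S * (S - 1)) :=
              mul_le_mul_of_nonneg_left convB (by positivity)
            linarith
        _ = S := by linarith [hSid]
  have hsum : Summable a := summable_of_sum_range_le ha Pbound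
  set T := ∑' n, a n with hT_def
  have hTle : T ≤ S := Summable.tsum_le_of_sum_range_le hsum Pbound
  -- shifted sequence
  set b : ℕ → ℝ := fun l => if l = 0 then 0 else a l with hb_def
  have hbnn : ∀ l, 0 ≤ b l := by
    intro l; simp only [hb_def]; split <;> [exact le_refl 0; exact ha l]
  have hble : ∀ l, b l ≤ a l := by
    intro l; simp only [hb_def]; split <;> [exact ha l; exact le_refl _]
  have hsumb : Summable b := hsum.of_nonneg_of_le hbnn hble
  have hTb : ∑' l, b l = T - 1 := by
    rw [Summable.tsum_eq_zero_add hsumb]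
    have : ∀ l : ℕ, b (l + 1) = a (l + 1) := fun l => by simp [hb_def]
    rw [tsum_congr this]
    have h' := Summable.tsum_eq_zero_add hsum
    rw [ha0] at h'
    simp only [hb_def, if_pos rfl]
    rw [← hT_def] at h'
    linarith
  have hna : Summable (fun n => ‖a n‖) := by
    have : (fun n => ‖a n‖) = a := funext (fun n => Real.norm_of_nonneg (ha n))
    rw [this]; exact hsum
  have hnb : Summable (fun n => ‖b n‖) := by
    have : (fun n => ‖b n‖) = b := funext (fun n => Real.norm_of_nonneg (hbnn n))
    rw [this]; exact hsumb
  have hC : T * (∑' l, b l) = ∑' n, ∑ k ∈ range (n+1), a k * b (n - k) :=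
    tsum_mul_tsum_eq_tsum_sum_range_of_summable_norm hna hnb
  have hcC : ∀ n, (∑ k ∈ range (n+1), a k * b (n - k)) = c (n+1) := by
    intro n
    rw [Finset.sum_range_succ]
    have hb0 : b (n - n) = 0 := by simp [hb_def]
    rw [hb0, mul_zero, add_zero]
    simp only [hc_def, Nat.add_sub_cancel]
    apply Finset.sum_congr rfl
    intro k hk
    rw [Finset.mem_range] at hk
    congr 1
    simp only [hb_def]
    rw [if_neg (by omega)]
  have hCs : Summable (fun n => ∑ k ∈ range (n+1), a k * b (n - k)) :=
    (summable_norm_sum_mul_range_of_summable_norm hna hnb).of_norm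
  have hc_sum : Summable c := by
    have he : (fun n => c (n + 1)) = (fun n => ∑ k ∈ range (n+1), a k * b (n - k)) :=
      funext (fun n => (hcC n).symm)
    exact (summable_nat_add_iff 1).mp (by rw [he]; exact hCs)
  have htsum_c : ∑' m, c m = T * (T - 1) := by
    rw [Summable.tsum_eq_zero_add hc_sum]
    have hc0 : c 0 = 0 := by simp [hc_def]
    rw [hc0, zero_add, tsum_congr (fun n => (hcC n).symm), ← hC, hTb]
  have hTid : T = 1 + z * T + z ^ 2 * (T * (T - 1)) := by
    have h1 := Summable.tsum_eq_zero_add hsum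
    rw [ha0] at h1
    have h2 : ∑' m, a (m + 1) = ∑' m, (z * a m + z ^ 2 * c m) :=
      tsum_congr (fun m => haRec m)
    rw [Summable.tsum_add (hsum.mul_left z) (hc_sum.mul_left (z ^ 2)),
      tsum_mul_left, tsum_mul_left, htsum_c] at h2
    rw [← hT_def] at h1 h2
    rw [h2] at h1
    linarith [h1]
  have hq : (T - S) * ((1 - z + z ^ 2) - z ^ 2 * (T + S)) = 0 := by
    linear_combination hTid - hSid
  rcases mul_eq_zero.mp hq with h | h
  · have : T = S := by linarith
    exact this
  · exfalso
    have h2S := twoz2S (z := z) hz0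
    have hw := sqrtD_pos hz0 hz1
    nlinarith [h, h2S, hw, mul_nonneg (sub_nonneg.mpr hTle) (sq_nonneg z)]

/-- Closed form and algebraic equation for the generating function of
RNA secondary structures: `S(z) = (1 − z + z² − √((z²+z+1)(z²−3z+1)))/(2z²)`,
`z²S² − (1−z+z²)S + 1 = 0`, with `S(0) = s(0) = 1`. -/
theorem secStr_gf_closed_form :
    (∀ z : ℝ, 0 < z → z < rho →
      (∑' n : ℕ, (secCount n : ℝ) * z ^ n = Sfun z ∧
       z ^ 2 * (Sfun z) ^ 2 - (1 - z + z ^ 2) * Sfun z + 1 = 0)) ∧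
    secCount 0 = 1 := by
  constructor
  · intro z hz0 hz1
    exact ⟨gf_eq secCount secCount_zero secCount_rec' hz0 hz1, Sfun_quad hz0 hz1⟩
  · exact secCount_zero
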